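/- The second Brocard point H− lies on each of the three tangent circles: dist aC H− = dist aC C, dist bA H− = dist bA A, and dist cB H− = dist cB B. That is, H− lies on the circle through A and C tangent to BC at C, on the circle through B and A tangent to CA at A, and on the circle through C and B tangent to AB at B. -/

import Mathlib

open EuclideanGeometry RealInnerProductSpace

lemma inner_aux {V : Type*} [NormedAddCommGroup V] [InnerProductSpace ℝ V]
    (u v p w : V) (s x y : ℝ)
    (e : s • w = s • p - (x • u + y • v)) :
    s^2 * ⟪w, w⟫ = s^2*⟪p,p⟫ - 2*s*(x*⟪p,u⟫ + y*⟪p,v⟫)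
      + (x^2*⟪u,u⟫ + 2*x*y*⟪u,v⟫ + y^2*⟪v,v⟫) := by
  have h : s^2 * ⟪w,w⟫ = ⟪s•w, s•w⟫ := by
    rw [real_inner_smul_left, real_inner_smul_right]; ring
  rw [h, e]
  simp only [inner_sub_left, inner_sub_right, inner_add_left, inner_add_right,
    real_inner_smul_left, real_inner_smul_right]
  linear_combination (s*x)*(real_inner_comm u p) + (s*y)*(real_inner_comm v p)
    - (x*y)*(real_inner_comm v u)

lemma aux {V : Type*} [NormedAddCommGroup V] [InnerProductSpace ℝ V]
    (A B C P H : V) (a b c : ℝ) (ha : a = dist B C) (hb : b = dist C A) (hc : c = dist A B)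
    (hs : a^2*b^2 + b^2*c^2 + c^2*a^2 ≠ 0)
    (hH : H = (a^2*b^2 + b^2*c^2 + c^2*a^2)⁻¹ •
      ((a^2*b^2) • A + (b^2*c^2) • B + (c^2*a^2) • C))
    (h1 : dist P A = dist P C) (h2 : ⟪P - C, B - C⟫ = 0) :
    dist P H = dist P C := by
  have hd : ∀ X Y : V, dist X Y ^ 2 = ⟪X - Y, X - Y⟫ := by
    intro X Y; rw [dist_eq_norm, real_inner_self_eq_norm_sq]
  have hHC : (a^2*b^2 + b^2*c^2 + c^2*a^2) • (H - C)
      = (a^2*b^2) • (A - C) + (b^2*c^2) • (B - C) := by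
    rw [hH, smul_sub, smul_smul, mul_inv_cancel₀ hs, one_smul]; module
  have e : (a^2*b^2 + b^2*c^2 + c^2*a^2) • (P - H)
      = (a^2*b^2 + b^2*c^2 + c^2*a^2) • (P - C)
        - ((a^2*b^2) • (A - C) + (b^2*c^2) • (B - C)) := by
    rw [← hHC]; module
  have h1' : ⟪P - C - (A - C), P - C - (A - C)⟫ = ⟪P - C, P - C⟫ := by
    have hPA : P - A = P - C - (A - C) := by abel
    rw [← hPA, ← hd, ← hd, h1]
  set u := A - C with hu
  set v := B - C with hv
  set p := P - C with hp
  have ha2 : a^2 = ⟪v,v⟫ := by rw [ha, hd]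
  have hb2 : b^2 = ⟪u,u⟫ := by rw [hb, dist_comm, hd]
  have hc2 : c^2 = ⟪u,u⟫ - 2*⟪u,v⟫ + ⟪v,v⟫ := by
    have hAB : A - B = u - v := by rw [hu, hv]; abel
    rw [hc, hd, hAB]
    simp only [inner_sub_left, inner_sub_right]
    rw [real_inner_comm v u]; ring
  have h1s : ⟪u,u⟫ = 2*⟪p,u⟫ := by
    simp only [inner_sub_left, inner_sub_right] at h1'
    linear_combination h1' - real_inner_comm u p
  have key := inner_aux u v p (P - H) (a^2*b^2 + b^2*c^2 + c^2*a^2) (a^2*b^2) (b^2*c^2) e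
  have key2 : (a^2*b^2 + b^2*c^2 + c^2*a^2)^2 * ⟪P - H, P - H⟫
      = (a^2*b^2 + b^2*c^2 + c^2*a^2)^2 * ⟪p, p⟫ := by
    rw [key, ha2, hb2, hc2]
    linear_combination ((⟪v,v⟫*⟪u,u⟫ + ⟪u,u⟫*(⟪u,u⟫-2*⟪u,v⟫+⟪v,v⟫) + (⟪u,u⟫-2*⟪u,v⟫+⟪v,v⟫)*⟪v,v⟫)*(⟪v,v⟫*⟪u,u⟫))*h1s
      - (2*(⟪v,v⟫*⟪u,u⟫ + ⟪u,u⟫*(⟪u,u⟫-2*⟪u,v⟫+⟪v,v⟫) + (⟪u,u⟫-2*⟪u,v⟫+⟪v,v⟫)*⟪v,v⟫)*(⟪u,u⟫*(⟪u,u⟫-2*⟪u,v⟫+⟪v,v⟫)))*h2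
  have hsq : dist P H ^ 2 = dist P C ^ 2 := by
    rw [hd, hd]
    exact mul_left_cancel₀ (pow_ne_zero 2 hs) key2
  nlinarith [dist_nonneg (x := P) (y := H), dist_nonneg (x := P) (y := C)]

theorem second_brocard_on_tangent_circles
    (A B C aC bA cB Hm : EuclideanSpace ℝ (Fin 2))
    (hABC : AffineIndependent ℝ ![A, B, C])
    (a b c : ℝ) (ha : a = dist B C) (hb : b = dist C A) (hc : c = dist A B)
    (hHm : Hm = (a^2*b^2 + b^2*c^2 + c^2*a^2)⁻¹ •
      ((a^2*b^2) • A + (b^2*c^2) • B + (c^2*a^2) • C))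
    (haC1 : dist aC A = dist aC C) (haC2 : ⟪aC - C, B - C⟫ = 0)
    (hbA1 : dist bA B = dist bA A) (hbA2 : ⟪bA - A, C - A⟫ = 0)
    (hcB1 : dist cB C = dist cB B) (hcB2 : ⟪cB - B, A - B⟫ = 0) :
    dist aC Hm = dist aC C ∧ dist bA Hm = dist bA A ∧ dist cB Hm = dist cB B := by
  have hAB : A ≠ B := fun h => (by decide : (0:Fin 3) ≠ 1) (hABC.injective (by simpa using h))
  have hBC : B ≠ C := fun h => (by decide : (1:Fin 3) ≠ 2) (hABC.injective (by simpa using h))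
  have hCA : C ≠ A := fun h => (by decide : (2:Fin 3) ≠ 0) (hABC.injective (by simpa using h))
  have ha' : 0 < a := ha ▸ dist_pos.mpr hBC
  have hb' : 0 < b := hb ▸ dist_pos.mpr hCA
  have hc' : 0 < c := hc ▸ dist_pos.mpr hAB
  have hs : a^2*b^2 + b^2*c^2 + c^2*a^2 ≠ 0 := by positivity
  refine ⟨?_, ?_, ?_⟩
  · exact dist_comm Hm aC ▸ (dist_comm aC Hm ▸
      aux A B C aC Hm a b c ha hb hc hs hHm haC1 haC2)
  · have hs2 : b^2*c^2 + c^2*a^2 + a^2*b^2 ≠ 0 := by positivity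
    have hH2 : Hm = (b^2*c^2 + c^2*a^2 + a^2*b^2)⁻¹ •
        ((b^2*c^2) • B + (c^2*a^2) • C + (a^2*b^2) • A) := by
      rw [hHm, show b^2*c^2 + c^2*a^2 + a^2*b^2 = a^2*b^2 + b^2*c^2 + c^2*a^2 from by ring]
      congr 1
      abel
    exact aux B C A bA Hm b c a hb hc ha hs2 hH2 hbA1 hbA2
  · have hs3 : c^2*a^2 + a^2*b^2 + b^2*c^2 ≠ 0 := by positivity
    have hH3 : Hm = (c^2*a^2 + a^2*b^2 + b^2*c^2)⁻¹ •
        ((c^2*a^2) • C + (a^2*b^2) • A + (b^2*c^2) • B) := by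
      rw [hHm, show c^2*a^2 + a^2*b^2 + b^2*c^2 = a^2*b^2 + b^2*c^2 + c^2*a^2 from by ring]
      congr 1
      abel
    exact aux C A B cB Hm c a b hc ha hb hs3 hH3 hcB1 hcB2
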